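/- Let k ≥ 2 and n > k(k-1). Then there exists a set of C(k,2)·(n - k(k-1) - 1)^{k-2} 2-rooks in {0,...,n-1}^k such that no two rooks attack a common point and no rook attacks another's location. Concretely, for each pair i < j, take all points whose i-th coordinate is 2i-2+(j-1)(j-2), whose j-th coordinate is 2i-1+(j-1)(j-2), and whose other coordinates range over [k(k-1)+1, n-1], each attacking in directions i and j. -/

import Mathlib

/-- A 2-rook in `{0,...,n-1}^k`: a point together with a set of chosen coordinate
directions. -/
abbrev Rook (n k : ℕ) := (Fin k → Fin n) × Finset (Fin k)

/-- A rook attacks every point differing from its location in exactly one of its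
chosen coordinates. -/
def Rook.attacks {n k : ℕ} (R : Rook n k) (q : Fin k → Fin n) : Prop :=
  ∃ i ∈ R.2, q i ≠ R.1 i ∧ ∀ j, j ≠ i → q j = R.1 j

/-- The special coordinate value for the pair `(i,j)` with offset `e ∈ {0,1}`. -/
def tpSpec (i j e : ℕ) : ℕ := j * (j - 1) + 2 * i + e

lemma tpSpec_inj {i j i' j' e e' : ℕ} (hij : i < j) (hij' : i' < j')
    (he : e ≤ 1) (he' : e' ≤ 1) (h : tpSpec i j e = tpSpec i' j' e') :
    i = i' ∧ j = j' ∧ e = e' := by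
  obtain ⟨a, rfl⟩ : ∃ a, j = a + 1 := ⟨j - 1, by omega⟩
  obtain ⟨b, rfl⟩ : ∃ b, j' = b + 1 := ⟨j' - 1, by omega⟩
  simp only [tpSpec, Nat.add_sub_cancel] at h
  have hj : a = b := by
    rcases lt_trichotomy a b with h1 | h1 | h1
    · nlinarith
    · exact h1
    · nlinarith
  subst hj; omega

lemma tpSpec_lt {i j k : ℕ} (hij : i < j) (hj : j < k) : tpSpec i j 1 < k * (k - 1) := by
  obtain ⟨a, rfl⟩ : ∃ a, j = a + 1 := ⟨j - 1, by omega⟩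
  obtain ⟨b, rfl⟩ : ∃ b, k = b + 1 := ⟨k - 1, by omega⟩
  simp only [tpSpec, Nat.add_sub_cancel]
  nlinarith

lemma tpSpec_zero_lt {i j k : ℕ} (hij : i < j) (hj : j < k) :
    tpSpec i j 0 < k * (k - 1) := by
  have := tpSpec_lt hij hj
  simp only [tpSpec] at *
  omega

/-- The block of rooks for a fixed pair of directions. -/
def tpBlock (n k : ℕ) (hn : 0 < n) (i j : Fin k) : Finset (Rook n k) :=
  (Fintype.piFinset (fun l : Fin k =>
    if l = i then {(⟨tpSpec (i : ℕ) (j : ℕ) 0 % n, Nat.mod_lt _ hn⟩ : Fin n)}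
    else if l = j then {(⟨tpSpec (i : ℕ) (j : ℕ) 1 % n, Nat.mod_lt _ hn⟩ : Fin n)}
    else Finset.univ.filter fun x : Fin n => k * (k - 1) + 1 ≤ (x : ℕ))).image
    (fun f => (f, ({i, j} : Finset (Fin k))))

lemma mem_tpBlock {n k : ℕ} (hn : 0 < n) {i j : Fin k} (hij : i ≠ j)
    (hs0 : tpSpec (i : ℕ) (j : ℕ) 0 < n) (hs1 : tpSpec (i : ℕ) (j : ℕ) 1 < n)
    {R : Rook n k} :
    R ∈ tpBlock n k hn i j ↔
      R.2 = {i, j} ∧ ((R.1 i : ℕ) = tpSpec (i : ℕ) (j : ℕ) 0) ∧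
      ((R.1 j : ℕ) = tpSpec (i : ℕ) (j : ℕ) 1) ∧
      (∀ l, l ≠ i → l ≠ j → k * (k - 1) + 1 ≤ (R.1 l : ℕ)) := by
  constructor
  · rintro hR
    simp only [tpBlock, Finset.mem_image] at hR
    obtain ⟨f, hf, rfl⟩ := hR
    rw [Fintype.mem_piFinset] at hf
    refine ⟨rfl, ?_, ?_, ?_⟩
    · have h := hf i
      rw [if_pos rfl, Finset.mem_singleton] at h
      show (f i : ℕ) = _
      rw [h]
      exact Nat.mod_eq_of_lt hs0
    · have h := hf j
      rw [if_neg (Ne.symm hij), if_pos rfl, Finset.mem_singleton] at h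
      show (f j : ℕ) = _
      rw [h]
      exact Nat.mod_eq_of_lt hs1
    · intro l hli hlj
      have h := hf l
      rw [if_neg hli, if_neg hlj, Finset.mem_filter] at h
      exact h.2
  · rintro ⟨h2, hi, hj, hfree⟩
    simp only [tpBlock, Finset.mem_image]
    refine ⟨R.1, ?_, by rw [← h2]⟩
    rw [Fintype.mem_piFinset]
    intro l
    by_cases hli : l = i
    · subst hli
      rw [if_pos rfl, Finset.mem_singleton]
      exact Fin.ext (by rw [hi]; exact (Nat.mod_eq_of_lt hs0).symm)
    · by_cases hlj : l = j
      · subst hlj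
        rw [if_neg hli, if_pos rfl, Finset.mem_singleton]
        exact Fin.ext (by rw [hj]; exact (Nat.mod_eq_of_lt hs1).symm)
      · rw [if_neg hli, if_neg hlj, Finset.mem_filter]
        exact ⟨Finset.mem_univ _, hfree l hli hlj⟩

lemma card_tpBlock {n k : ℕ} (hn : 0 < n) {i j : Fin k} (hij : i ≠ j) :
    (tpBlock n k hn i j).card = (n - k * (k - 1) - 1) ^ (k - 2) := by
  rw [tpBlock, Finset.card_image_of_injective _ (fun f g h => (Prod.mk.injEq _ _ _ _ ▸ h).1),
    Fintype.card_piFinset]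
  have hfilter : (Finset.univ.filter fun x : Fin n => k * (k - 1) + 1 ≤ (x : ℕ)).card
      = n - k * (k - 1) - 1 := by
    rcases le_or_gt n (k * (k - 1) + 1) with h | h
    · have : (Finset.univ.filter fun x : Fin n => k * (k - 1) + 1 ≤ (x : ℕ)) = ∅ := by
        ext x
        simp only [Finset.mem_filter, Finset.mem_univ, true_and, Finset.notMem_empty,
          iff_false]
        omega
      rw [this]; simp; omega
    · have : (Finset.univ.filter fun x : Fin n => k * (k - 1) + 1 ≤ (x : ℕ))
          = (Finset.univ : Finset (Fin (n - k * (k - 1) - 1))).image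
            (fun x : Fin (n - k * (k - 1) - 1) =>
              (⟨(x : ℕ) + (k * (k - 1) + 1), by omega⟩ : Fin n)) := by
        ext x
        simp only [Finset.mem_filter, Finset.mem_univ, true_and, Finset.mem_image]
        constructor
        · intro hx
          refine ⟨⟨(x : ℕ) - (k * (k - 1) + 1), by omega⟩, ?_⟩
          exact Fin.ext (by simp; omega)
        · rintro ⟨y, rfl⟩; simp
      rw [this, Finset.card_image_of_injective, Finset.card_univ, Fintype.card_fin]
      intro a b hab
      have := congrArg (fun x : Fin n => (x : ℕ)) hab
      simp at this
      exact Fin.ext this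
  have key : ∀ l : Fin k,
      ((if l = i then {(⟨tpSpec (i : ℕ) (j : ℕ) 0 % n, Nat.mod_lt _ hn⟩ : Fin n)}
        else if l = j then {(⟨tpSpec (i : ℕ) (j : ℕ) 1 % n, Nat.mod_lt _ hn⟩ : Fin n)}
        else Finset.univ.filter fun x : Fin n => k * (k - 1) + 1 ≤ (x : ℕ)) : Finset (Fin n)).card
      = if l = i ∨ l = j then 1 else n - k * (k - 1) - 1 := by
    intro l
    by_cases hli : l = i
    · simp [hli]
    · by_cases hlj : l = j
      · simp [hlj, Ne.symm hij]
      · rw [if_neg hli, if_neg hlj, if_neg (show ¬(l = i ∨ l = j) by tauto)]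
        exact hfilter
  rw [Finset.prod_congr rfl (fun l _ => key l)]
  rw [Finset.prod_ite, Finset.prod_const, Finset.prod_const, one_pow, one_mul]
  congr 1
  rw [Finset.filter_not, Finset.card_sdiff_of_subset (Finset.filter_subset _ _), Finset.card_univ,
    Fintype.card_fin]
  congr 1
  have : (Finset.univ.filter fun l : Fin k => l = i ∨ l = j) = {i, j} := by
    ext l
    simp [Finset.mem_insert, Finset.mem_singleton]
  rw [this, Finset.card_pair hij]

lemma card_pairs (k : ℕ) :
    ((Finset.univ : Finset (Fin k × Fin k)).filter fun p => p.1 < p.2).card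
      = Nat.choose k 2 := by
  rw [Nat.choose_two_right, ← Finset.sum_range_id,
    ← Fin.sum_univ_eq_sum_range (fun i => i) k, Finset.card_filter,
    Fintype.sum_prod_type_right]
  refine Finset.sum_congr rfl fun j _ => ?_
  have : ∑ i : Fin k, (if (i, j).1 < (i, j).2 then 1 else 0)
      = (Finset.univ.filter fun i : Fin k => i < j).card := by
    rw [Finset.card_filter]
  rw [this]
  have : (Finset.univ.filter fun i : Fin k => i < j) = Finset.Iio j := by
    ext i; simp
  rw [this, Fin.card_Iio]

lemma tp_pair_eq {k : ℕ} {i1 j1 i2 j2 : Fin k} (h1 : i1 < j1) (h2 : i2 < j2)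
    (h : ({i1, j1} : Finset (Fin k)) = {i2, j2}) : i1 = i2 ∧ j1 = j2 := by
  have hi1 : i1 = i2 ∨ i1 = j2 := by
    have : i1 ∈ ({i2, j2} : Finset (Fin k)) := h ▸ Finset.mem_insert_self _ _
    simpa using this
  have hj1 : j1 = i2 ∨ j1 = j2 := by
    have : j1 ∈ ({i2, j2} : Finset (Fin k)) := by
      rw [← h]; simp
    simpa using this
  have hi2 : i2 = i1 ∨ i2 = j1 := by
    have : i2 ∈ ({i1, j1} : Finset (Fin k)) := h ▸ Finset.mem_insert_self _ _
    simpa using this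
  have v1 : (i1 : ℕ) < j1 := h1
  have v2 : (i2 : ℕ) < j2 := h2
  have e1 : (i1 : ℕ) = i2 ∨ (i1 : ℕ) = j2 := by
    rcases hi1 with h | h <;> [left; right] <;> rw [h]
  have e2 : (j1 : ℕ) = i2 ∨ (j1 : ℕ) = j2 := by
    rcases hj1 with h | h <;> [left; right] <;> rw [h]
  have e3 : (i2 : ℕ) = i1 ∨ (i2 : ℕ) = j1 := by
    rcases hi2 with h | h <;> [left; right] <;> rw [h]
  exact ⟨Fin.ext (by omega), Fin.ext (by omega)⟩

theorem two_packing_construction (n k : ℕ) (hk : 2 ≤ k) (hn : k * (k - 1) < n) :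
    ∃ S : Finset (Rook n k),
      S.card = Nat.choose k 2 * (n - k * (k - 1) - 1) ^ (k - 2) ∧
      (∀ R ∈ S, R.2.card = 2) ∧
      (∀ R1 ∈ S, ∀ R2 ∈ S, R1 ≠ R2 →
        (∀ q : Fin k → Fin n, ¬ (R1.attacks q ∧ R2.attacks q)) ∧
        ¬ R1.attacks R2.1 ∧ R1.1 ≠ R2.1) := by
  have hn0 : 0 < n := Nat.lt_of_le_of_lt (Nat.zero_le _) hn
  classical
  have hspec : ∀ i j : Fin k, i < j →
      tpSpec (i : ℕ) (j : ℕ) 0 < n ∧ tpSpec (i : ℕ) (j : ℕ) 1 < n := by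
    intro i j hij
    have h1 := tpSpec_lt (show (i : ℕ) < (j : ℕ) from hij) j.isLt
    have h0 := tpSpec_zero_lt (show (i : ℕ) < (j : ℕ) from hij) j.isLt
    exact ⟨lt_trans h0 hn, lt_trans h1 hn⟩
  set S : Finset (Rook n k) :=
    ((Finset.univ : Finset (Fin k × Fin k)).filter fun p => p.1 < p.2).biUnion
      (fun p => tpBlock n k hn0 p.1 p.2) with hS
  have memS : ∀ R : Rook n k, R ∈ S ↔ ∃ i j : Fin k, i < j ∧ R.2 = {i, j} ∧
      ((R.1 i : ℕ) = tpSpec (i : ℕ) (j : ℕ) 0) ∧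
      ((R.1 j : ℕ) = tpSpec (i : ℕ) (j : ℕ) 1) ∧
      (∀ l, l ≠ i → l ≠ j → k * (k - 1) + 1 ≤ (R.1 l : ℕ)) := by
    intro R
    rw [hS, Finset.mem_biUnion]
    constructor
    · rintro ⟨p, hp, hR⟩
      rw [Finset.mem_filter] at hp
      have hij := hp.2
      rw [mem_tpBlock hn0 (ne_of_lt hij) (hspec _ _ hij).1 (hspec _ _ hij).2] at hR
      exact ⟨p.1, p.2, hij, hR⟩
    · rintro ⟨i, j, hij, h⟩
      exact ⟨(i, j), Finset.mem_filter.mpr ⟨Finset.mem_univ _, hij⟩,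
        (mem_tpBlock hn0 (ne_of_lt hij) (hspec _ _ hij).1 (hspec _ _ hij).2).mpr h⟩
  refine ⟨S, ?_, ?_, ?_⟩
  · -- cardinality
    have hdisj : ∀ p ∈ (Finset.univ : Finset (Fin k × Fin k)).filter fun p => p.1 < p.2,
        ∀ p' ∈ (Finset.univ : Finset (Fin k × Fin k)).filter fun p => p.1 < p.2,
        p ≠ p' → Disjoint (tpBlock n k hn0 p.1 p.2) (tpBlock n k hn0 p'.1 p'.2) := by
      intro p hp p' hp' hne
      rw [Finset.mem_filter] at hp hp'
      rw [Finset.disjoint_left]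
      intro R hR hR'
      rw [mem_tpBlock hn0 (ne_of_lt hp.2) (hspec _ _ hp.2).1 (hspec _ _ hp.2).2] at hR
      rw [mem_tpBlock hn0 (ne_of_lt hp'.2) (hspec _ _ hp'.2).1 (hspec _ _ hp'.2).2] at hR'
      have heq := tp_pair_eq hp.2 hp'.2 (hR.1.symm.trans hR'.1)
      exact hne (Prod.ext heq.1 heq.2)
    rw [hS, Finset.card_biUnion hdisj,
      Finset.sum_congr rfl
        (fun p hp => card_tpBlock hn0 (ne_of_lt (Finset.mem_filter.mp hp).2)),
      Finset.sum_const, card_pairs, smul_eq_mul]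
  · -- every rook uses 2 directions
    intro R hR
    obtain ⟨i, j, hij, h2, -⟩ := (memS R).mp hR
    rw [h2, Finset.card_pair (ne_of_lt hij)]
  · -- no conflicts
    intro R1 hR1 R2 hR2 hne
    obtain ⟨i1, j1, hlt1, h21, h1i, h1j, h1f⟩ := (memS R1).mp hR1
    obtain ⟨i2, j2, hlt2, h22, h2i, h2j, h2f⟩ := (memS R2).mp hR2
    have v1 : (i1 : ℕ) < (j1 : ℕ) := hlt1
    have v2 : (i2 : ℕ) < (j2 : ℕ) := hlt2
    have sp1 : tpSpec (i1 : ℕ) (j1 : ℕ) 1 < k * (k - 1) := tpSpec_lt v1 j1.isLt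
    have sp2 : tpSpec (i2 : ℕ) (j2 : ℕ) 1 < k * (k - 1) := tpSpec_lt v2 j2.isLt
    have key12 : ∀ (l : Fin k) (e : ℕ), e ≤ 1 →
        ((R2.1 l : ℕ) = tpSpec (i1 : ℕ) (j1 : ℕ) e) → i1 = i2 ∧ j1 = j2 := by
      intro l e he hval
      by_cases hl : l = i2
      · subst hl
        rw [h2i] at hval
        obtain ⟨e1, e2, -⟩ := tpSpec_inj v2 v1 (by norm_num) he hval
        exact ⟨Fin.ext e1.symm, Fin.ext e2.symm⟩
      · by_cases hl' : l = j2
        · subst hl'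
          rw [h2j] at hval
          obtain ⟨e1, e2, -⟩ := tpSpec_inj v2 v1 le_rfl he hval
          exact ⟨Fin.ext e1.symm, Fin.ext e2.symm⟩
        · exfalso
          have hge := h2f l hl hl'
          rw [hval] at hge
          simp only [tpSpec] at hge sp1
          omega
    have key21 : ∀ (l : Fin k) (e : ℕ), e ≤ 1 →
        ((R1.1 l : ℕ) = tpSpec (i2 : ℕ) (j2 : ℕ) e) → i1 = i2 ∧ j1 = j2 := by
      intro l e he hval
      by_cases hl : l = i1
      · subst hl
        rw [h1i] at hval
        obtain ⟨e1, e2, -⟩ := tpSpec_inj v1 v2 (by norm_num) he hval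
        exact ⟨Fin.ext e1, Fin.ext e2⟩
      · by_cases hl' : l = j1
        · subst hl'
          rw [h1j] at hval
          obtain ⟨e1, e2, -⟩ := tpSpec_inj v1 v2 le_rfl he hval
          exact ⟨Fin.ext e1, Fin.ext e2⟩
        · exfalso
          have hge := h1f l hl hl'
          rw [hval] at hge
          simp only [tpSpec] at hge sp2
          omega
    refine ⟨?_, ?_, ?_⟩
    · -- no common attacked point
      intro q' hq'
      obtain ⟨⟨l1, hl1mem, hne1, hr1⟩, ⟨l2, hl2mem, hne2, hr2⟩⟩ := hq'
      rw [h21] at hl1mem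
      rw [h22] at hl2mem
      simp only [Finset.mem_insert, Finset.mem_singleton] at hl1mem hl2mem
      by_cases hpair : i1 = i2 ∧ j1 = j2
      · obtain ⟨rfl, rfl⟩ := hpair
        apply hne
        have hpt : R1.1 = R2.1 := by
          funext l
          by_cases hli : l = i1
          · subst hli
            exact Fin.ext (h1i.trans h2i.symm)
          · by_cases hlj : l = j1
            · subst hlj
              exact Fin.ext (h1j.trans h2j.symm)
            · have hll1 : l ≠ l1 := by rcases hl1mem with h' | h' <;> rw [h'] <;> assumption
              have hll2 : l ≠ l2 := by rcases hl2mem with h' | h' <;> rw [h'] <;> assumption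
              exact (hr1 l hll1).symm.trans (hr2 l hll2)
        exact Prod.ext hpt (h21.trans h22.symm)
      · have step : ∀ u : Fin k, u ≠ l1 → u ≠ l2 → ∀ e : ℕ, e ≤ 1 →
            ((R1.1 u : ℕ) = tpSpec (i1 : ℕ) (j1 : ℕ) e) → False := by
          intro u hul1 hul2 e he hval
          have hq : (R2.1 u : ℕ) = tpSpec (i1 : ℕ) (j1 : ℕ) e := by
            rw [← hr2 u hul2, hr1 u hul1]; exact hval
          exact hpair (key12 u e he hq)
        have step2 : ∀ u : Fin k, u ≠ l1 → u ≠ l2 → ∀ e : ℕ, e ≤ 1 →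
            ((R2.1 u : ℕ) = tpSpec (i2 : ℕ) (j2 : ℕ) e) → False := by
          intro u hul1 hul2 e he hval
          have hp' : (R1.1 u : ℕ) = tpSpec (i2 : ℕ) (j2 : ℕ) e := by
            rw [← hr1 u hul1, hr2 u hul2]; exact hval
          exact hpair (key21 u e he hp')
        rcases hl1mem with hc1 | hc1 <;> rcases hl2mem with hc2 | hc2
        · -- l1 = i1, l2 = i2
          have hA : j1 = i2 := by
            by_contra hx
            exact step j1 (by rw [hc1]; exact ne_of_gt hlt1) (by rw [hc2]; exact hx) 1 le_rfl h1j
          have hB : j2 = i1 := by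
            by_contra hx
            exact step2 j2 (by rw [hc1]; exact hx) (by rw [hc2]; exact ne_of_gt hlt2) 1 le_rfl h2j
          have eA : (j1 : ℕ) = (i2 : ℕ) := by rw [hA]
          have eB : (j2 : ℕ) = (i1 : ℕ) := by rw [hB]
          omega
        · -- l1 = i1, l2 = j2
          have hA : j1 = j2 := by
            by_contra hx
            exact step j1 (by rw [hc1]; exact ne_of_gt hlt1) (by rw [hc2]; exact hx) 1 le_rfl h1j
          have hB : i2 = i1 := by
            by_contra hx
            exact step2 i2 (by rw [hc1]; exact hx) (by rw [hc2]; exact ne_of_lt hlt2) 0 (by norm_num) h2i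
          exact hpair ⟨hB.symm, hA⟩
        · -- l1 = j1, l2 = i2
          have hA : i1 = i2 := by
            by_contra hx
            exact step i1 (by rw [hc1]; exact ne_of_lt hlt1) (by rw [hc2]; exact hx) 0 (by norm_num) h1i
          have hB : j2 = j1 := by
            by_contra hx
            exact step2 j2 (by rw [hc1]; exact hx) (by rw [hc2]; exact ne_of_gt hlt2) 1 le_rfl h2j
          exact hpair ⟨hA, hB.symm⟩
        · -- l1 = j1, l2 = j2
          have hA : i1 = j2 := by
            by_contra hx
            exact step i1 (by rw [hc1]; exact ne_of_lt hlt1) (by rw [hc2]; exact hx) 0 (by norm_num) h1i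
          have hB : i2 = j1 := by
            by_contra hx
            exact step2 i2 (by rw [hc1]; exact hx) (by rw [hc2]; exact ne_of_lt hlt2) 0 (by norm_num) h2i
          have eA : (i1 : ℕ) = (j2 : ℕ) := by rw [hA]
          have eB : (i2 : ℕ) = (j1 : ℕ) := by rw [hB]
          omega
    · -- R1 does not attack R2's location
      rintro ⟨l, hlmem, hne', hrest⟩
      rw [h21] at hlmem
      simp only [Finset.mem_insert, Finset.mem_singleton] at hlmem
      by_cases hpair : i1 = i2 ∧ j1 = j2
      · obtain ⟨he1, he2⟩ := hpair
        rcases hlmem with hc | hc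
        · refine hne' ?_
          rw [hc]
          exact Fin.ext (by rw [h1i, he1, he2]; exact h2i)
        · refine hne' ?_
          rw [hc]
          exact Fin.ext (by rw [h1j, he1, he2]; exact h2j)
      · rcases hlmem with hc | hc
        · have hval : (R2.1 j1 : ℕ) = tpSpec (i1 : ℕ) (j1 : ℕ) 1 := by
            rw [hrest j1 (by rw [hc]; exact ne_of_gt hlt1)]; exact h1j
          exact hpair (key12 j1 1 le_rfl hval)
        · have hval : (R2.1 i1 : ℕ) = tpSpec (i1 : ℕ) (j1 : ℕ) 0 := by
            rw [hrest i1 (by rw [hc]; exact ne_of_lt hlt1)]; exact h1i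
          exact hpair (key12 i1 0 (by norm_num) hval)
    · -- distinct locations
      intro heq
      by_cases hpair : i1 = i2 ∧ j1 = j2
      · obtain ⟨rfl, rfl⟩ := hpair
        exact hne (Prod.ext heq (h21.trans h22.symm))
      · have hval : (R2.1 i1 : ℕ) = tpSpec (i1 : ℕ) (j1 : ℕ) 0 := by
          rw [← heq]; exact h1i
        exact hpair (key12 i1 0 (by norm_num) hval)
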